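/- Let i, j, k, ℓ be non-negative integers with j > ℓ and kj + i + ℓ < n. The circulant digraph C_n^{i,j,k,ℓ} with representer polynomial γ(x) = x^i · (1 + x + ... + x^ℓ) · (1 + x^j + x^{2j} + ... + x^{kj}) is singular if and only if gcd(ℓ+1, n) ≥ 2 or gcd(k+1, n/gcd(n,j)) ≥ 2. -/

import Mathlib

open scoped Classical
open Finset

section Aux

lemma geomSumZero (x : ℂ) (N : ℕ) (hN : 0 < N) :
    (∑ r ∈ Finset.range N, x ^ r) = 0 ↔ x ^ N = 1 ∧ x ≠ 1 := by
  by_cases hx : x = 1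
  · subst hx
    simp [hN.ne']
  · rw [geom_sum_eq hx, div_eq_zero_iff]
    constructor
    · rintro (h | h)
      · exact ⟨by rwa [sub_eq_zero] at h, hx⟩
      · exact absurd (by rwa [sub_eq_zero] at h) hx
    · rintro ⟨h, -⟩
      exact Or.inl (by rw [h, sub_self])

lemma keyNat (N L : ℕ) (hN : 0 < N) :
    (∃ m : ℕ, N ∣ m * (L + 1) ∧ ¬ N ∣ m) ↔ 2 ≤ Nat.gcd (L + 1) N := by
  constructor
  · rintro ⟨m, h1, h2⟩
    by_contra h
    have hgpos : 0 < Nat.gcd (L + 1) N := Nat.gcd_pos_of_pos_right _ hN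
    have hg : Nat.gcd (L + 1) N = 1 := by omega
    have hco : Nat.Coprime N (L + 1) := Nat.coprime_comm.mp hg
    exact h2 (hco.dvd_of_dvd_mul_right h1)
  · intro h
    set d := Nat.gcd (L + 1) N with hd
    have hdN : d ∣ N := Nat.gcd_dvd_right _ _
    have hdL : d ∣ L + 1 := Nat.gcd_dvd_left _ _
    refine ⟨N / d, ?_, ?_⟩
    · obtain ⟨c, hc⟩ := hdL
      refine ⟨c, ?_⟩
      rw [hc, ← mul_assoc, Nat.div_mul_cancel hdN]
    · intro hdvd
      have h1 : N / d < N := Nat.div_lt_self hN (by omega)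
      have h2 : 0 < N / d := Nat.div_pos (Nat.le_of_dvd hN hdN) (by omega)
      have := Nat.le_of_dvd h2 hdvd
      omega

lemma dvdCongr {N a b : ℕ} (h : a ≡ b [MOD N]) : N ∣ a ↔ N ∣ b := by
  rw [Nat.dvd_iff_mod_eq_zero, Nat.dvd_iff_mod_eq_zero, h]

lemma jReduce (n j m : ℕ) (hn : 0 < n) :
    n ∣ m * j ↔ (n / Nat.gcd n j) ∣ m := by
  set g := Nat.gcd n j with hg
  have g0 : 0 < g := Nat.gcd_pos_of_pos_left j hn
  have hgn : g ∣ n := Nat.gcd_dvd_left n j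
  have hgj : g ∣ j := Nat.gcd_dvd_right n j
  have hco : Nat.Coprime (n / g) (j / g) := Nat.coprime_div_gcd_div_gcd g0
  have hmj : m * j = g * (m * (j / g)) := by
    conv_lhs => rw [← Nat.div_mul_cancel hgj]
    ring
  constructor
  · intro h
    have h2 : g * (n / g) ∣ g * (m * (j / g)) := by
      rw [Nat.mul_div_cancel' hgn, ← hmj]; exact h
    exact hco.dvd_of_dvd_mul_right ((Nat.mul_dvd_mul_iff_left g0).mp h2)
  · intro h
    have h2 := (Nat.mul_dvd_mul_iff_left g0).mpr (Dvd.dvd.mul_right h (j / g))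
    rw [Nat.mul_div_cancel' hgn, ← hmj] at h2
    exact h2

variable {n : ℕ} [NeZero n] {ζ : ℂ}

omit [NeZero n] in
lemma powMod (hζ : IsPrimitiveRoot ζ n) (x : ℕ) : ζ ^ x = ζ ^ (x % n) := by
  conv_lhs => rw [← Nat.mod_add_div x n]
  rw [pow_add, pow_mul, hζ.pow_eq_one, one_pow, mul_one]

omit [NeZero n] in
lemma powCongr (hζ : IsPrimitiveRoot ζ n) {x y : ℕ} (h : x ≡ y [MOD n]) :
    ζ ^ x = ζ ^ y := by
  rw [powMod hζ x, powMod hζ y, h]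

lemma epowAdd (hζ : IsPrimitiveRoot ζ n) (a b : ZMod n) :
    ζ ^ (a + b).val = ζ ^ a.val * ζ ^ b.val := by
  rw [← pow_add]
  exact powCongr hζ (by rw [ZMod.val_add]; exact Nat.mod_modEq _ n)

lemma epowNatMul (hζ : IsPrimitiveRoot ζ n) (a : ℕ) (m : ZMod n) :
    ζ ^ (((a : ZMod n)) * m).val = (ζ ^ m.val) ^ a := by
  rw [← pow_mul]
  refine powCongr hζ ?_
  have h1 : (((a : ZMod n)) * m).val = ((a % n) * m.val) % n := by
    rw [ZMod.val_mul, ZMod.val_natCast]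
  rw [h1]
  calc ((a % n) * m.val) % n ≡ (a % n) * m.val [MOD n] := Nat.mod_modEq _ n
    _ ≡ a * m.val [MOD n] := (Nat.mod_modEq a n).mul_right m.val
    _ = m.val * a := mul_comm _ _

lemma detCirc (hζ : IsPrimitiveRoot ζ n) (c : ZMod n → ℂ) :
    (Matrix.of fun u v : ZMod n => c (v - u)).det =
      ∏ m : ZMod n, ∑ d : ZMod n, c d * ζ ^ (d * m).val := by
  classical
  set lam : ZMod n → ℂ := fun m => ∑ d : ZMod n, c d * ζ ^ (d * m).val with hlam
  set F : Matrix (ZMod n) (ZMod n) ℂ := Matrix.of fun u m => ζ ^ (u * m).val with hF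
  have hMF : (Matrix.of fun u v : ZMod n => c (v - u)) * F = F * Matrix.diagonal lam := by
    ext u m
    rw [Matrix.mul_apply, Matrix.mul_diagonal]
    have step1 : ∑ v : ZMod n, (Matrix.of fun u v : ZMod n => c (v - u)) u v * F v m
        = ∑ d : ZMod n, c d * ζ ^ ((u + d) * m).val := by
      refine (Fintype.sum_equiv (Equiv.addLeft u) _ _ ?_).symm
      intro d
      simp only [Equiv.coe_addLeft, Matrix.of_apply, hF]
      rw [add_sub_cancel_left]
    rw [step1]
    have step2 : ∀ d : ZMod n, c d * ζ ^ ((u + d) * m).val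
        = ζ ^ (u * m).val * (c d * ζ ^ (d * m).val) := by
      intro d
      rw [add_mul, epowAdd hζ]
      ring
    rw [Finset.sum_congr rfl (fun d _ => step2 d), ← Finset.mul_sum]
    rfl
  have hFdet : F.det ≠ 0 := by
    set σ : Fin n ≃ ZMod n :=
      { toFun := fun a => (a.1 : ZMod n)
        invFun := fun z => ⟨z.val, ZMod.val_lt z⟩
        left_inv := by
          intro a
          ext
          simp [ZMod.val_natCast, Nat.mod_eq_of_lt a.2]
        right_inv := by
          intro z
          simp [ZMod.natCast_val, ZMod.cast_id] } with hσdef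
    rw [← Matrix.det_submatrix_equiv_self σ F]
    have hvand : F.submatrix σ σ = Matrix.vandermonde (fun i : Fin n => ζ ^ (i : ℕ)) := by
      ext a b
      simp only [Matrix.submatrix_apply, Matrix.vandermonde, hF, Matrix.of_apply, hσdef,
        Equiv.coe_fn_mk]
      rw [epowNatMul hζ a.1 (b.1 : ZMod n), ZMod.val_natCast, Nat.mod_eq_of_lt b.2,
        ← pow_mul, ← pow_mul, mul_comm]
    rw [hvand, Matrix.det_vandermonde]
    rw [Finset.prod_ne_zero_iff]
    intro a _
    rw [Finset.prod_ne_zero_iff]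
    intro b hb
    rw [Finset.mem_Ioi] at hb
    refine sub_ne_zero.mpr ?_
    intro hab
    exact absurd (Fin.val_injective (hζ.pow_inj b.2 a.2 hab)) hb.ne'
  have hdet := congrArg Matrix.det hMF
  rw [Matrix.det_mul, Matrix.det_mul, Matrix.det_diagonal, mul_comm F.det] at hdet
  exact mul_right_cancel₀ hFdet hdet

end Aux

/-- The circulant digraph `C_n^{i,j,k,ℓ}` with representer polynomial
`x^i (1 + x + ⋯ + x^ℓ)(1 + x^j + ⋯ + x^{kj})` is singular iff
`gcd(ℓ+1, n) ≥ 2` or `gcd(k+1, n / gcd(n,j)) ≥ 2`. -/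
theorem Cnijkl_singular_iff (n i j k ℓ : ℕ) [NeZero n]
    (hjl : ℓ < j) (hlt : k * j + i + ℓ < n) :
    (Matrix.of fun u v : ZMod n =>
        if ∃ t' ≤ k, ∃ s', i ≤ s' ∧ s' ≤ i + ℓ ∧
            (v - u) = ((s' + t' * j : ℕ) : ZMod n) then (1 : ℚ) else 0).det = 0 ↔
      (2 ≤ Nat.gcd (ℓ + 1) n ∨ 2 ≤ Nat.gcd (k + 1) (n / Nat.gcd n j)) := by
  classical
  have hn : 0 < n := Nat.pos_of_ne_zero (NeZero.ne n)
  set ζ : ℂ := Complex.exp (2 * Real.pi * Complex.I / n) with hzeta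
  have hζ : IsPrimitiveRoot ζ n := Complex.isPrimitiveRoot_exp n (NeZero.ne n)
  set c : ZMod n → ℂ := fun d =>
    if ∃ t' ≤ k, ∃ s', i ≤ s' ∧ s' ≤ i + ℓ ∧ d = ((s' + t' * j : ℕ) : ZMod n)
    then (1 : ℂ) else 0 with hc
  -- Step A : pass to ℂ
  have hmap : (Matrix.of fun u v : ZMod n =>
      if ∃ t' ≤ k, ∃ s', i ≤ s' ∧ s' ≤ i + ℓ ∧
          (v - u) = ((s' + t' * j : ℕ) : ZMod n) then (1 : ℚ) else 0).map (algebraMap ℚ ℂ)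
      = Matrix.of fun u v : ZMod n => c (v - u) := by
    ext u v
    simp only [Matrix.map_apply, Matrix.of_apply, hc]
    rw [apply_ite (algebraMap ℚ ℂ), map_one, map_zero]
  have keyA : ((Matrix.of fun u v : ZMod n =>
      if ∃ t' ≤ k, ∃ s', i ≤ s' ∧ s' ≤ i + ℓ ∧
          (v - u) = ((s' + t' * j : ℕ) : ZMod n) then (1 : ℚ) else 0).det = 0)
      ↔ ((Matrix.of fun u v : ZMod n => c (v - u)).det = 0) := by
    rw [← hmap, ← RingHom.mapMatrix_apply, ← RingHom.map_det]
    exact (map_eq_zero_iff _ (algebraMap ℚ ℂ).injective).symm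
  rw [keyA, detCirc hζ c, Finset.prod_eq_zero_iff]
  simp only [Finset.mem_univ, true_and]
  -- Step B : compute the eigenvalues
  set T : Finset (ℕ × ℕ) := Finset.range (k + 1) ×ˢ Finset.Icc i (i + ℓ) with hT
  set φ : ℕ × ℕ → ZMod n := fun p => ((p.2 + p.1 * j : ℕ) : ZMod n) with hφ
  have hbound : ∀ p ∈ T, p.2 + p.1 * j < n := by
    intro p hp
    simp only [hT, Finset.mem_product, Finset.mem_range, Finset.mem_Icc, Nat.lt_succ_iff] at hp
    have : p.1 * j ≤ k * j := Nat.mul_le_mul_right j hp.1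
    omega
  have hinj : ∀ p ∈ T, ∀ q ∈ T, φ p = φ q → p = q := by
    rintro ⟨t1, s1⟩ hp ⟨t2, s2⟩ hq hpq
    have hp' := hbound _ hp
    have hq' := hbound _ hq
    simp only [hT, Finset.mem_product, Finset.mem_range, Finset.mem_Icc, Nat.lt_succ_iff] at hp hq
    simp only at hp' hq'
    have hnat : s1 + t1 * j = s2 + t2 * j := by
      have := congrArg ZMod.val hpq
      simpa only [hφ, ZMod.val_natCast, Nat.mod_eq_of_lt hp', Nat.mod_eq_of_lt hq'] using this
    have h12 : t1 = t2 := by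
      rcases Nat.lt_trichotomy t1 t2 with h | h | h
      · exfalso
        have h2 : t1 * j + j ≤ t2 * j := by
          have := Nat.mul_le_mul_right j (Nat.succ_le_of_lt h)
          simpa [Nat.succ_mul] using this
        have := hp.2.2
        have := hq.2.1
        linarith
      · exact h
      · exfalso
        have h2 : t2 * j + j ≤ t1 * j := by
          have := Nat.mul_le_mul_right j (Nat.succ_le_of_lt h)
          simpa [Nat.succ_mul] using this
        have := hq.2.2
        have := hp.2.1
        linarith
    subst h12
    have h22 : s1 = s2 := by
      have := Nat.add_right_cancel hnat
      exact this
    simp [h22]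
  have hsum : ∀ m : ZMod n, (∑ d : ZMod n, c d * ζ ^ (d * m).val)
      = (∑ t ∈ Finset.range (k + 1), ((ζ ^ m.val) ^ j) ^ t) *
        ((ζ ^ m.val) ^ i * ∑ r ∈ Finset.range (ℓ + 1), (ζ ^ m.val) ^ r) := by
    intro m
    set x := ζ ^ m.val with hx
    have e1 : (∑ d : ZMod n, c d * ζ ^ (d * m).val)
        = ∑ d ∈ T.image φ, ζ ^ (d * m).val := by
      rw [show (∑ d : ZMod n, c d * ζ ^ (d * m).val)
          = ∑ d : ZMod n, (if d ∈ T.image φ then ζ ^ (d * m).val else 0) from ?_,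
        Finset.sum_ite_mem, Finset.univ_inter]
      refine Finset.sum_congr rfl fun d _ => ?_
      have hcd : c d = if d ∈ T.image φ then 1 else 0 := by
        simp only [hc]
        refine if_congr ?_ rfl rfl
        simp only [Finset.mem_image, Finset.mem_product, Finset.mem_range, Finset.mem_Icc,
          Nat.lt_succ_iff, hT, hφ]
        constructor
        · rintro ⟨t', ht', s', hs1, hs2, hd⟩
          exact ⟨(t', s'), ⟨ht', hs1, hs2⟩, hd.symm⟩
        · rintro ⟨⟨t', s'⟩, ⟨ht', hs1, hs2⟩, hd⟩
          exact ⟨t', ht', s', hs1, hs2, hd.symm⟩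
      rw [hcd, ite_mul, one_mul, zero_mul]
    rw [e1, Finset.sum_image hinj]
    have e2 : ∀ p ∈ T, ζ ^ (φ p * m).val = x ^ p.2 * (x ^ j) ^ p.1 := by
      intro p _
      rw [hφ]
      rw [epowNatMul hζ (p.2 + p.1 * j) m, ← hx, pow_add, pow_mul']
    rw [Finset.sum_congr rfl e2, hT, Finset.sum_product]
    have e3 : ∑ s ∈ Finset.Icc i (i + ℓ), x ^ s
        = x ^ i * ∑ r ∈ Finset.range (ℓ + 1), x ^ r := by
      have himg : Finset.Icc i (i + ℓ) = (Finset.range (ℓ + 1)).image (fun r => i + r) := by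
        ext s
        simp only [Finset.mem_Icc, Finset.mem_image, Finset.mem_range, Nat.lt_succ_iff]
        constructor
        · rintro ⟨h1, h2⟩; exact ⟨s - i, by omega, by omega⟩
        · rintro ⟨r, h1, rfl⟩; omega
      rw [himg, Finset.sum_image (by intro a _ b _ h; simp only at h; omega), Finset.mul_sum]
      exact Finset.sum_congr rfl fun r _ => pow_add x i r
    calc ∑ t ∈ Finset.range (k + 1), ∑ s ∈ Finset.Icc i (i + ℓ), x ^ s * (x ^ j) ^ t
        = ∑ t ∈ Finset.range (k + 1), (∑ s ∈ Finset.Icc i (i + ℓ), x ^ s) * (x ^ j) ^ t := by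
          exact Finset.sum_congr rfl fun t _ => (Finset.sum_mul _ _ _).symm
      _ = ∑ t ∈ Finset.range (k + 1), (x ^ i * ∑ r ∈ Finset.range (ℓ + 1), x ^ r) * (x ^ j) ^ t := by
          rw [e3]
      _ = (∑ t ∈ Finset.range (k + 1), (x ^ j) ^ t) *
            (x ^ i * ∑ r ∈ Finset.range (ℓ + 1), x ^ r) := by
          rw [← Finset.mul_sum, mul_comm]
  -- Step C : zero eigenvalue iff divisibility conditions
  have hx0 : ∀ m : ZMod n, (ζ : ℂ) ^ m.val ≠ 0 :=
    fun m => pow_ne_zero _ (hζ.ne_zero (NeZero.ne n))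
  have hpt : ∀ m : ZMod n, ((∑ d : ZMod n, c d * ζ ^ (d * m).val) = 0) ↔
      ((n ∣ m.val * (ℓ + 1) ∧ ¬ n ∣ m.val) ∨
        (n ∣ m.val * j * (k + 1) ∧ ¬ n ∣ m.val * j)) := by
    intro m
    rw [hsum m, mul_eq_zero, mul_eq_zero]
    have hxi : ¬ ((ζ ^ m.val) ^ i = 0) := pow_ne_zero _ (hx0 m)
    have hA : (∑ t ∈ Finset.range (k + 1), ((ζ ^ m.val) ^ j) ^ t) = 0
        ↔ (n ∣ m.val * j * (k + 1) ∧ ¬ n ∣ m.val * j) := by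
      rw [geomSumZero _ _ (Nat.succ_pos k)]
      have ha1 : ((ζ ^ m.val) ^ j) ^ (k + 1) = ζ ^ (m.val * j * (k + 1)) := by
        rw [pow_mul, pow_mul]
      have ha2 : (ζ ^ m.val) ^ j = ζ ^ (m.val * j) := (pow_mul ζ _ _).symm
      rw [ha1, ha2, hζ.pow_eq_one_iff_dvd, Ne, hζ.pow_eq_one_iff_dvd]
    have hB : (∑ r ∈ Finset.range (ℓ + 1), (ζ ^ m.val) ^ r) = 0
        ↔ (n ∣ m.val * (ℓ + 1) ∧ ¬ n ∣ m.val) := by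
      rw [geomSumZero _ _ (Nat.succ_pos ℓ)]
      have hb1 : (ζ ^ m.val) ^ (ℓ + 1) = ζ ^ (m.val * (ℓ + 1)) := (pow_mul ζ _ _).symm
      rw [hb1, hζ.pow_eq_one_iff_dvd, Ne, hζ.pow_eq_one_iff_dvd]
    rw [hA, hB]
    constructor
    · rintro (h | h | h)
      · exact Or.inr h
      · exact absurd h hxi
      · exact Or.inl h
    · rintro (h | h)
      · exact Or.inr (Or.inr h)
      · exact Or.inl h
  rw [exists_congr hpt, exists_or]
  -- Step D : translate divisibility existence statements
  have hD1 : (∃ m : ZMod n, n ∣ m.val * (ℓ + 1) ∧ ¬ n ∣ m.val) ↔ 2 ≤ Nat.gcd (ℓ + 1) n := by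
    rw [← keyNat n ℓ hn]
    constructor
    · rintro ⟨m, h⟩; exact ⟨m.val, h⟩
    · rintro ⟨m, h1, h2⟩
      refine ⟨(m : ZMod n), ?_, ?_⟩
      · rw [ZMod.val_natCast, dvdCongr ((Nat.mod_modEq m n).mul_right _)]
        exact h1
      · rw [ZMod.val_natCast]
        intro hdvd
        exact h2 ((Nat.dvd_mod_iff dvd_rfl).mp hdvd)
  have hD2 : (∃ m : ZMod n, n ∣ m.val * j * (k + 1) ∧ ¬ n ∣ m.val * j)
      ↔ 2 ≤ Nat.gcd (k + 1) (n / Nat.gcd n j) := by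
    have hn' : 0 < n / Nat.gcd n j :=
      Nat.div_pos (Nat.le_of_dvd hn (Nat.gcd_dvd_left n j)) (Nat.gcd_pos_of_pos_left j hn)
    rw [← keyNat _ k hn']
    constructor
    · rintro ⟨m, h1, h2⟩
      refine ⟨m.val, ?_, ?_⟩
      · rw [← jReduce n j _ hn, mul_right_comm]
        exact h1
      · intro hd
        exact h2 ((jReduce n j m.val hn).mpr hd)
    · rintro ⟨m, h1, h2⟩
      refine ⟨(m : ZMod n), ?_, ?_⟩
      · rw [ZMod.val_natCast,
          dvdCongr (((Nat.mod_modEq m n).mul_right j).mul_right (k + 1)),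
          mul_right_comm, jReduce n j _ hn]
        exact h1
      · rw [ZMod.val_natCast, dvdCongr ((Nat.mod_modEq m n).mul_right j), jReduce n j _ hn]
        exact fun hd => h2 hd
  rw [hD1, hD2]
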